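/- arXiv:1805.01237 — 2 statements merged into one kernel-verified Lean document; each statement's English description precedes it below -/
import Mathlib

section
/- Let K ≥ 1 be an integer, t ≥ 1 an integer, and let ε_1, …, ε_t be real numbers with ε_n ∈ (0,1] for all n. On a probability space, let J_1, …, J_t be independent random variables taking values in {0, 1, …, K} such that P(J_n = a) = ε_n/K for every a ∈ {1, …, K} (and P(J_n = 0) = 1 − ε_n). For each a ∈ {1, …, K} let T_a(t) = #{ n ≤ t : J_n = a }. Set x_t = (1/(2K)) · Σ_{n=1}^t ε_n. Then P( T_a(t) ≥ x_t for every a ∈ {1, …, K} ) ≥ 1 − K·exp(−x_t/5). -/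
open MeasureTheory ProbabilityTheory

/-- with probability at least `1 - K·exp(-x_t/5)`, every arm
`a ∈ {1,…,K}` has been chosen by the random selection at least `x_t` times. -/
theorem random_selection_counts_lower_bound
    {Ω : Type*} [MeasurableSpace Ω] (μ : Measure Ω) [IsProbabilityMeasure μ]
    (K t : ℕ) (hK : 1 ≤ K) (ht : 1 ≤ t)
    (ε : Fin t → ℝ) (hε : ∀ n, ε n ∈ Set.Ioc (0 : ℝ) 1)
    (J : Fin t → Ω → ℕ) (hJmeas : ∀ n, Measurable (J n))
    (hJval : ∀ n ω, J n ω ≤ K)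
    (hJa : ∀ n, ∀ a ∈ Finset.Icc 1 K, μ {ω | J n ω = a} = ENNReal.ofReal (ε n / K))
    (hJzero : ∀ n, μ {ω | J n ω = 0} = 1 - ENNReal.ofReal (ε n))
    (hindep : iIndepFun J μ)
    (x : ℝ) (hx : x = (1 / (2 * K)) * ∑ n, ε n) :
    ENNReal.ofReal (1 - K * Real.exp (-x / 5)) ≤
      μ {ω | ∀ a ∈ Finset.Icc 1 K,
        x ≤ ((Finset.univ.filter fun n : Fin t => J n ω = a).card : ℝ)} := by
  classical
  have hKpos : (0 : ℝ) < K := by exact_mod_cast hK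
  have hxpos : 0 < x := by
    rw [hx]
    apply mul_pos (by positivity)
    apply Finset.sum_pos (fun n _ => (hε n).1)
    exact ⟨⟨0, ht⟩, Finset.mem_univ _⟩
  -- setup
  set θ : ℝ := -Real.log 2 with hθdef
  have hθ : θ ≤ 0 := neg_nonpos.mpr (Real.log_nonneg one_le_two)
  have hexpθ : Real.exp θ = 1 / 2 := by
    rw [hθdef, Real.exp_neg, Real.exp_log two_pos]; norm_num
  -- the per-arm Chernoff bound
  have key : ∀ a ∈ Finset.Icc 1 K,
      μ {ω | ((Finset.univ.filter fun n : Fin t => J n ω = a).card : ℝ) ≤ x} ≤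
        ENNReal.ofReal (Real.exp (-x / 5)) := by
    intro a ha
    set X : Fin t → Ω → ℝ := fun n ω => if J n ω = a then 1 else 0 with hX
    have hXmeas : ∀ n, Measurable (X n) := by
      intro n
      exact (measurable_from_top (f := fun k : ℕ => if k = a then (1:ℝ) else 0)).comp (hJmeas n)
    have hXindep : iIndepFun X μ :=
      hindep.comp (fun _ k => if k = a then (1:ℝ) else 0) (fun _ => measurable_from_top)
    have hSmeas : ∀ n : Fin t, MeasurableSet {ω | J n ω = a} := fun n =>
      hJmeas n (measurableSet_singleton a)
    -- rewrite count as sum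
    have hcard : ∀ ω, ((Finset.univ.filter fun n : Fin t => J n ω = a).card : ℝ)
        = (∑ n, X n) ω := by
      intro ω
      simp only [Finset.sum_apply, hX, Finset.card_filter]
      push_cast
      simp
    -- pointwise form of exp (θ * X n ·)
    have hptw : ∀ n : Fin t, (fun ω => Real.exp (θ * X n ω)) =
        (fun ω => ({ω | J n ω = a}.indicator (fun _ => Real.exp θ - 1) ω + 1)) := by
      intro n
      funext ω
      by_cases h : J n ω = a <;>
        simp [hX, h, Set.indicator_apply, Set.mem_setOf_eq]
    have hint : ∀ n : Fin t, Integrable (fun ω => Real.exp (θ * X n ω)) μ := by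
      intro n
      rw [hptw n]
      exact (((integrable_const _).indicator (hSmeas n)).add (integrable_const 1))
    have hμreal : ∀ n : Fin t, (μ {ω | J n ω = a}).toReal = ε n / K := by
      intro n
      rw [hJa n a ha, ENNReal.toReal_ofReal (div_nonneg (hε n).1.le hKpos.le)]
    have hmgf : ∀ n : Fin t, mgf (X n) μ θ = 1 - (ε n / K) / 2 := by
      intro n
      rw [mgf, hptw n, integral_add ((integrable_const _).indicator (hSmeas n)) (integrable_const 1),
        integral_indicator_const _ (hSmeas n), integral_const]
      simp [hμreal n, hexpθ, measure_univ, smul_eq_mul]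
      rw [measureReal_def, hμreal n]
      ring
    -- Chernoff
    have hchern := measure_le_le_exp_mul_mgf (X := ∑ n, X n) (μ := μ) x hθ
      (hXindep.integrable_exp_mul_sum hXmeas (fun n _ => hint n))
    rw [hXindep.mgf_sum hXmeas] at hchern
    -- bound the product
    have hsum : ∑ n : Fin t, (ε n / K) / 2 = x := by
      simp_rw [div_div]
      rw [← Finset.sum_div, hx]
      ring
    have hprod : ∏ n : Fin t, mgf (X n) μ θ ≤ Real.exp (-x) := by
      calc ∏ n : Fin t, mgf (X n) μ θ ≤ ∏ n : Fin t, Real.exp (-((ε n / K) / 2)) := by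
            apply Finset.prod_le_prod
            · intro n _
              rw [hmgf n]
              have h1 : ε n / K ≤ 1 := by
                rw [div_le_one hKpos]
                exact (hε n).2.trans (by exact_mod_cast hK)
              linarith
            · intro n _
              rw [hmgf n]
              have := Real.add_one_le_exp (-((ε n / K) / 2))
              linarith
        _ = Real.exp (-x) := by
            rw [← Real.exp_sum, ← hsum]
            simp [Finset.sum_neg_distrib]
    have hbound : Real.exp (-θ * x) * ∏ n : Fin t, mgf (X n) μ θ ≤ Real.exp (-x / 5) := by
      calc Real.exp (-θ * x) * ∏ n : Fin t, mgf (X n) μ θ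
          ≤ Real.exp (-θ * x) * Real.exp (-x) :=
            mul_le_mul_of_nonneg_left hprod (Real.exp_pos _).le
        _ = Real.exp (-θ * x + -x) := (Real.exp_add _ _).symm
        _ ≤ Real.exp (-x / 5) := by
            apply Real.exp_le_exp.mpr
            rw [hθdef]
            nlinarith [Real.log_two_lt_d9, Real.log_pos one_lt_two]
    -- conclude in ENNReal
    have hne : μ {ω | ((Finset.univ.filter fun n : Fin t => J n ω = a).card : ℝ) ≤ x} ≠ ⊤ :=
      measure_ne_top μ _
    rw [← ENNReal.ofReal_toReal hne]
    apply ENNReal.ofReal_le_ofReal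
    have heq : {ω | ((Finset.univ.filter fun n : Fin t => J n ω = a).card : ℝ) ≤ x}
        = {ω | (∑ n, X n) ω ≤ x} :=
      Set.ext fun ω => by rw [Set.mem_setOf_eq, Set.mem_setOf_eq, hcard ω]
    rw [heq]
    exact hchern.trans hbound
  -- union bound
  set G := {ω | ∀ a ∈ Finset.Icc 1 K,
      x ≤ ((Finset.univ.filter fun n : Fin t => J n ω = a).card : ℝ)} with hG
  have hGc : Gᶜ ⊆ ⋃ a ∈ Finset.Icc 1 K,
      {ω | ((Finset.univ.filter fun n : Fin t => J n ω = a).card : ℝ) ≤ x} := by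
    intro ω hω
    simp only [hG, Set.mem_compl_iff, Set.mem_setOf_eq, not_forall] at hω
    obtain ⟨a, ha, hlt⟩ := hω
    exact Set.mem_biUnion ha (le_of_not_ge hlt)
  have hμGc : μ Gᶜ ≤ (K : ENNReal) * ENNReal.ofReal (Real.exp (-x / 5)) := by
    calc μ Gᶜ ≤ μ (⋃ a ∈ Finset.Icc 1 K,
          {ω | ((Finset.univ.filter fun n : Fin t => J n ω = a).card : ℝ) ≤ x}) :=
        measure_mono hGc
      _ ≤ ∑ a ∈ Finset.Icc 1 K,
          μ {ω | ((Finset.univ.filter fun n : Fin t => J n ω = a).card : ℝ) ≤ x} :=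
        measure_biUnion_finset_le _ _
      _ ≤ ∑ _a ∈ Finset.Icc 1 K, ENNReal.ofReal (Real.exp (-x / 5)) :=
        Finset.sum_le_sum key
      _ = (K : ENNReal) * ENNReal.ofReal (Real.exp (-x / 5)) := by
        rw [Finset.sum_const, Nat.card_Icc]
        simp [nsmul_eq_mul]
  have h1 : (1 : ENNReal) ≤ μ G + μ Gᶜ := by
    rw [← measure_univ (μ := μ), ← Set.union_compl_self G]
    exact measure_union_le _ _
  have h2 : (1 : ENNReal) - (K : ENNReal) * ENNReal.ofReal (Real.exp (-x / 5)) ≤ μ G := by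
    rw [tsub_le_iff_right]
    exact h1.trans (add_le_add_right hμGc _)
  refine le_trans ?_ h2
  rw [ENNReal.ofReal_sub _ (by positivity)]
  apply tsub_le_tsub
  · simp
  · rw [ENNReal.ofReal_mul (by positivity)]
    simp
end

section
/- Let x > 0 and let m, m' be integers with m ≥ x and m' ≥ x. Let X_1, …, X_m be i.i.d. random variables with values in [0,1] and mean μ, let X'_1, …, X'_{m'} be i.i.d. random variables with values in [0,1] and mean μ', and suppose the two families are independent of each other. Assume μ' > μ and set Δ = μ' − μ. Then P( (1/m) Σ_{i=1}^m X_i > (1/m') Σ_{i=1}^{m'} X'_i ) ≤ 2·exp(−Δ²x/2). -/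
open MeasureTheory ProbabilityTheory


section Auxiliary
open Real


lemma hoeff_calc (p : ℝ) (hp0 : 0 ≤ p) (hp1 : p ≤ 1) {t : ℝ} (ht : 0 ≤ t) :
    1 - p + p * exp t ≤ exp (t * p + t ^ 2 / 8) := by
  have hD : ∀ s : ℝ, 0 < 1 - p + p * exp s := by
    intro s
    rcases lt_or_ge p 1 with h | h
    · nlinarith [mul_nonneg hp0 (exp_pos s).le]
    · have hp : p = 1 := le_antisymm hp1 h
      simpa [hp] using exp_pos s
  set D : ℝ → ℝ := fun s => 1 - p + p * exp s with hDdef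
  have hDd : ∀ s, HasDerivAt D (p * exp s) s := by
    intro s
    exact ((Real.hasDerivAt_exp s).const_mul p).const_add (1 - p)
  set g1 : ℝ → ℝ := fun s => s / 4 + p - p * exp s / D s with hg1def
  have hg1d : ∀ s, HasDerivAt g1
      (1 / 4 - (p * exp s * D s - p * exp s * (p * exp s)) / (D s) ^ 2) s := by
    intro s
    have h1 : HasDerivAt (fun s : ℝ => s / 4 + p) (1 / 4) s :=
      ((hasDerivAt_id s).div_const 4).add_const p
    have h2 : HasDerivAt (fun s => p * exp s / D s)
        ((p * exp s * D s - p * exp s * (p * exp s)) / (D s) ^ 2) s :=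
      ((Real.hasDerivAt_exp s).const_mul p).div (hDd s) (hD s).ne'
    exact h1.sub h2
  have hg1deriv_nonneg : ∀ s, 0 ≤ deriv g1 s := by
    intro s
    rw [(hg1d s).deriv]
    have hDs := hD s
    rw [sub_nonneg, div_le_iff₀ (by positivity)]
    have : D s = 1 - p + p * exp s := rfl
    nlinarith [sq_nonneg (1 - p - p * exp s), exp_pos s]
  have hg1mono : Monotone g1 :=
    monotone_of_deriv_nonneg (fun s => (hg1d s).differentiableAt) hg1deriv_nonneg
  have hg10 : g1 0 = 0 := by
    simp [hg1def, hDdef]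
  have hg1nonneg : ∀ s, 0 ≤ s → 0 ≤ g1 s := by
    intro s hs
    rw [← hg10]; exact hg1mono hs
  set g : ℝ → ℝ := fun s => s ^ 2 / 8 + s * p - Real.log (D s) with hgdef
  have hgd : ∀ s, HasDerivAt g (g1 s) s := by
    intro s
    have h1 : HasDerivAt (fun s : ℝ => s ^ 2 / 8 + s * p) (s / 4 + p) s := by
      have := ((hasDerivAt_pow 2 s).div_const 8).add ((hasDerivAt_id s).mul_const p)
      refine this.congr_deriv ?_
      push_cast; ring
    have h2 : HasDerivAt (fun s => Real.log (D s)) (p * exp s / D s) s :=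
      (hDd s).log (hD s).ne'
    exact h1.sub h2
  have hgmono : MonotoneOn g (Set.Ici 0) := by
    apply monotoneOn_of_deriv_nonneg (convex_Ici 0)
    · exact (Differentiable.continuous (fun s => (hgd s).differentiableAt)).continuousOn
    · intro s hs
      exact (hgd s).differentiableAt.differentiableWithinAt
    · intro s hs
      rw [(hgd s).deriv]
      exact hg1nonneg s (le_of_lt (by simpa using hs))
  have hg0 : g 0 = 0 := by simp [hgdef, hDdef]
  have hgt : 0 ≤ g t := by
    rw [← hg0]
    exact hgmono Set.self_mem_Ici ht ht
  have hlog : Real.log (D t) ≤ t * p + t ^ 2 / 8 := by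
    have h : (0:ℝ) ≤ t ^ 2 / 8 + t * p - Real.log (D t) := hgt
    linarith
  calc 1 - p + p * exp t = exp (Real.log (D t)) := by rw [exp_log (hD t)]
    _ ≤ _ := exp_le_exp.2 hlog

variable {Ω : Type*} [MeasurableSpace Ω] (P : Measure Ω) [IsProbabilityMeasure P]

lemma integrable_of_range {Y : Ω → ℝ} (hmeas : Measurable Y)
    (hrange : ∀ ω, Y ω ∈ Set.Icc (0 : ℝ) 1) : Integrable Y P := by
  refine Integrable.mono' (integrable_const 1) hmeas.aestronglyMeasurable ?_
  refine Filter.Eventually.of_forall fun ω => ?_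
  rw [Real.norm_eq_abs, abs_le]
  exact ⟨by linarith [(hrange ω).1], (hrange ω).2⟩

lemma integrable_exp_of_range {Y : Ω → ℝ} (hmeas : Measurable Y)
    (hrange : ∀ ω, Y ω ∈ Set.Icc (0 : ℝ) 1) (t : ℝ) :
    Integrable (fun ω => exp (t * Y ω)) P := by
  refine Integrable.mono' (integrable_const (exp |t|)) ((hmeas.const_mul t).exp).aestronglyMeasurable ?_
  refine Filter.Eventually.of_forall fun ω => ?_
  rw [Real.norm_eq_abs, abs_of_pos (exp_pos _)]
  apply exp_le_exp.2
  calc t * Y ω ≤ |t * Y ω| := le_abs_self _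
    _ = |t| * |Y ω| := abs_mul _ _
    _ ≤ |t| * 1 := by
        refine mul_le_mul_of_nonneg_left ?_ (abs_nonneg t)
        rw [abs_le]; exact ⟨by linarith [(hrange ω).1], (hrange ω).2⟩
    _ = |t| := mul_one _

lemma mgf_bound {Y : Ω → ℝ} (hmeas : Measurable Y)
    (hrange : ∀ ω, Y ω ∈ Set.Icc (0 : ℝ) 1) {p : ℝ} (hmean : ∫ ω, Y ω ∂P = p)
    {t : ℝ} (ht : 0 ≤ t) : mgf Y P t ≤ exp (t * p + t ^ 2 / 8) := by
  have hint : Integrable Y P := integrable_of_range P hmeas hrange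
  have hp0 : 0 ≤ p := hmean ▸ integral_nonneg fun ω => (hrange ω).1
  have hp1 : p ≤ 1 := by
    rw [← hmean]
    calc ∫ ω, Y ω ∂P ≤ ∫ _, (1:ℝ) ∂P :=
          integral_mono hint (integrable_const 1) fun ω => (hrange ω).2
      _ = 1 := by simp
  have step1 : mgf Y P t ≤ 1 - p + p * exp t := by
    have hle : ∀ ω, exp (t * Y ω) ≤ 1 - Y ω + Y ω * exp t := by
      intro ω
      have hc := convexOn_exp.2 (Set.mem_univ (0:ℝ)) (Set.mem_univ t)
        (by linarith [(hrange ω).2] : (0:ℝ) ≤ 1 - Y ω) (hrange ω).1 (by ring)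
      simpa [smul_eq_mul, mul_comm] using hc
    calc mgf Y P t = ∫ ω, exp (t * Y ω) ∂P := rfl
      _ ≤ ∫ ω, (1 - Y ω + Y ω * exp t) ∂P := by
          have h1 : Integrable (fun ω => 1 - Y ω) P := (integrable_const 1).sub hint
          have h2 : Integrable (fun ω => Y ω * exp t) P := hint.mul_const _
          exact integral_mono (integrable_exp_of_range P hmeas hrange t) (h1.add h2) hle
      _ = 1 - p + p * exp t := by
          have h1 : Integrable (fun ω => 1 - Y ω) P := (integrable_const 1).sub hint
          have h2 : Integrable (fun ω => Y ω * exp t) P := hint.mul_const _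
          rw [integral_add h1 h2, integral_sub (integrable_const 1) hint,
            integral_mul_const, hmean]
          simp
  exact step1.trans (hoeff_calc p hp0 hp1 ht)

lemma tail_bound (n : ℕ) (Y : Fin n → Ω → ℝ) (hmeas : ∀ i, Measurable (Y i))
    (hrange : ∀ i ω, Y i ω ∈ Set.Icc (0 : ℝ) 1) {p : ℝ}
    (hmean : ∀ i, ∫ ω, Y i ω ∂P = p)
    (hind : iIndepFun Y P) {ε : ℝ} (hε : 0 < ε) :
    P {ω | (n : ℝ) * (p + ε) ≤ ∑ i, Y i ω} ≤ ENNReal.ofReal (exp (-2 * ε ^ 2 * n)) := by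
  set t : ℝ := 4 * ε with htdef
  have ht : 0 ≤ t := by positivity
  have hint : ∀ i ∈ Finset.univ, Integrable (fun ω => exp (t * Y i ω)) P :=
    fun i _ => integrable_exp_of_range P (hmeas i) (hrange i) t
  have hsumint : Integrable (fun ω => exp (t * (∑ i, Y i) ω)) P :=
    hind.integrable_exp_mul_sum hmeas hint
  have key := measure_ge_le_exp_mul_mgf (X := ∑ i, Y i) (μ := P)
    ((n : ℝ) * (p + ε)) ht hsumint
  have hmgf : mgf (∑ i, Y i) P t ≤ exp ((n : ℝ) * (t * p + t ^ 2 / 8)) := by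
    rw [hind.mgf_sum hmeas Finset.univ]
    calc ∏ i : Fin n, mgf (Y i) P t ≤ ∏ _i : Fin n, exp (t * p + t ^ 2 / 8) := by
          refine Finset.prod_le_prod (fun i _ => mgf_nonneg) fun i _ => ?_
          exact mgf_bound P (hmeas i) (hrange i) (hmean i) ht
      _ = exp ((n : ℝ) * (t * p + t ^ 2 / 8)) := by
          rw [Finset.prod_const, ← Real.exp_nat_mul]
          simp
  have hset : {ω | (n : ℝ) * (p + ε) ≤ ∑ i, Y i ω}
      = {ω | (n : ℝ) * (p + ε) ≤ (∑ i, Y i) ω} := by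
    ext ω; simp [Finset.sum_apply]
  rw [hset]
  have h1 : (P {ω | (n : ℝ) * (p + ε) ≤ (∑ i, Y i) ω}).toReal ≤ exp (-2 * ε ^ 2 * n) := by
    refine key.trans ?_
    calc exp (-t * ((n:ℝ) * (p + ε))) * mgf (∑ i, Y i) P t
        ≤ exp (-t * ((n:ℝ) * (p + ε))) * exp ((n : ℝ) * (t * p + t ^ 2 / 8)) := by
          exact mul_le_mul_of_nonneg_left hmgf (exp_pos _).le
      _ = exp (-2 * ε ^ 2 * n) := by
          rw [← Real.exp_add]
          congr 1
          rw [htdef]; ring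
  calc P _ = ENNReal.ofReal ((P {ω | (n : ℝ) * (p + ε) ≤ (∑ i, Y i) ω}).toReal) :=
        (ENNReal.ofReal_toReal (measure_ne_top _ _)).symm
    _ ≤ _ := ENNReal.ofReal_le_ofReal h1

end Auxiliary

section Main
variable {Ω : Type*} [MeasurableSpace Ω] {P : Measure Ω}

lemma iIndepFun_precomp {ι ι' : Type*} {f : ι → Ω → ℝ}
    (h : iIndepFun f P)
    {g : ι' → ι} (hg : Function.Injective g) :
    iIndepFun (fun j => f (g j)) P := by
  classical
  rw [iIndepFun_iff_measure_inter_preimage_eq_mul] at h ⊢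
  intro S sets hsets
  set sets' : ι → Set ℝ := fun i =>
    if h' : ∃ j ∈ S, g j = i then sets h'.choose else Set.univ with hsets'def
  have hkey : ∀ j ∈ S, sets' (g j) = sets j := by
    intro j hj
    have h' : ∃ j' ∈ S, g j' = g j := ⟨j, hj, rfl⟩
    rw [hsets'def]
    simp only [dif_pos h']
    exact congrArg sets (hg h'.choose_spec.2)
  have hsets'meas : ∀ i, i ∈ S.image g → MeasurableSet (sets' i) := by
    intro i hi
    rw [Finset.mem_image] at hi
    obtain ⟨j, hj, rfl⟩ := hi
    rw [hkey j hj]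
    exact hsets j hj
  have himg := h (S.image g) hsets'meas
  have hinter : (⋂ i ∈ S.image g, f i ⁻¹' sets' i) = ⋂ j ∈ S, f (g j) ⁻¹' sets j := by
    ext ω
    simp only [Set.mem_iInter, Finset.mem_image]
    constructor
    · intro hω j hj
      have := hω (g j) ⟨j, hj, rfl⟩
      rwa [hkey j hj] at this
    · rintro hω i ⟨j, hj, rfl⟩
      rw [hkey j hj]
      exact hω j hj
  have hprod : (∏ i ∈ S.image g, P (f i ⁻¹' sets' i)) = ∏ j ∈ S, P (f (g j) ⁻¹' sets j) := by
    rw [Finset.prod_image (fun a _ b _ hab => hg hab)]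
    exact Finset.prod_congr rfl fun j hj => by rw [hkey j hj]
  rw [← hinter, ← hprod]
  exact himg

end Main

/-- per-pair comparison lemma.  The probability that the empirical
mean of the worse arm (true mean `μ₁`) exceeds the empirical mean of the better
arm (true mean `μ₂ > μ₁`) is at most `2·exp(-Δ²x/2)` with `Δ = μ₂ - μ₁`. -/
theorem empirical_mean_comparison
    {Ω : Type*} [MeasurableSpace Ω] (P : Measure Ω) [IsProbabilityMeasure P]
    (x : ℝ) (hx : 0 < x)
    (m m' : ℕ) (hm : x ≤ (m : ℝ)) (hm' : x ≤ (m' : ℝ))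
    (μ₁ μ₂ : ℝ) (hlt : μ₁ < μ₂)
    (X : Fin m → Ω → ℝ) (X' : Fin m' → Ω → ℝ)
    (hXmeas : ∀ i, Measurable (X i)) (hX'meas : ∀ i, Measurable (X' i))
    (hXrange : ∀ i ω, X i ω ∈ Set.Icc (0 : ℝ) 1)
    (hX'range : ∀ i ω, X' i ω ∈ Set.Icc (0 : ℝ) 1)
    (hXmean : ∀ i, ∫ ω, X i ω ∂P = μ₁)
    (hX'mean : ∀ i, ∫ ω, X' i ω ∂P = μ₂)
    (hXid : ∀ i j, IdentDistrib (X i) (X j) P P)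
    (hX'id : ∀ i j, IdentDistrib (X' i) (X' j) P P)
    (hindep : iIndepFun (Sum.elim X X') P) :
    P {ω | (1 / (m' : ℝ)) * ∑ i, X' i ω < (1 / (m : ℝ)) * ∑ i, X i ω} ≤
      ENNReal.ofReal (2 * Real.exp (-(μ₂ - μ₁) ^ 2 * x / 2)) := by
  have hΔpos : 0 < μ₂ - μ₁ := sub_pos.2 hlt
  have hεpos : 0 < (μ₂ - μ₁) / 2 := by positivity
  have hm0 : (0:ℝ) < m := lt_of_lt_of_le hx hm
  have hm'0 : (0:ℝ) < m' := lt_of_lt_of_le hx hm'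
  have hXindep : iIndepFun X P := by
    have := iIndepFun_precomp hindep (Sum.inl_injective (α := Fin m) (β := Fin m'))
    exact this
  have hX'indep : iIndepFun X' P := by
    have := iIndepFun_precomp hindep (Sum.inr_injective (α := Fin m) (β := Fin m'))
    exact this
  have hZindep : iIndepFun (fun i ω => 1 - X' i ω) P := by
    have := hX'indep.comp (fun _ (y : ℝ) => 1 - y)
      (fun _ => measurable_const.sub measurable_id)
    exact this
  have hZmeas : ∀ i, Measurable (fun ω => 1 - X' i ω) :=
    fun i => measurable_const.sub (hX'meas i)
  have hZrange : ∀ i ω, (1 - X' i ω) ∈ Set.Icc (0:ℝ) 1 := fun i ω =>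
    ⟨by linarith [(hX'range i ω).2], by linarith [(hX'range i ω).1]⟩
  have hZmean : ∀ i, ∫ ω, (1 - X' i ω) ∂P = 1 - μ₂ := by
    intro i
    rw [integral_sub (integrable_const 1) (integrable_of_range P (hX'meas i) (hX'range i)),
      hX'mean i]
    simp
  have hB := tail_bound P m X hXmeas hXrange hXmean hXindep hεpos
  have hC := tail_bound P m' (fun i ω => 1 - X' i ω) hZmeas hZrange hZmean hZindep hεpos
  have hsub : {ω | (1 / (m' : ℝ)) * ∑ i, X' i ω < (1 / (m : ℝ)) * ∑ i, X i ω} ⊆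
      {ω | (m : ℝ) * (μ₁ + (μ₂ - μ₁) / 2) ≤ ∑ i, X i ω} ∪
      {ω | (m' : ℝ) * ((1 - μ₂) + (μ₂ - μ₁) / 2) ≤ ∑ i, (1 - X' i ω)} := by
    intro ω hω
    simp only [Set.mem_setOf_eq] at hω
    by_cases hB' : (m : ℝ) * (μ₁ + (μ₂ - μ₁) / 2) ≤ ∑ i, X i ω
    · exact Or.inl hB'
    · right
      push_neg at hB'
      simp only [Set.mem_setOf_eq]
      have h1 : (1 / (m : ℝ)) * ∑ i, X i ω < μ₁ + (μ₂ - μ₁) / 2 := by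
        have := mul_lt_mul_of_pos_left hB' (show (0:ℝ) < 1 / m by positivity)
        calc (1 / (m : ℝ)) * ∑ i, X i ω < (1 / (m : ℝ)) * ((m : ℝ) * (μ₁ + (μ₂ - μ₁) / 2)) :=
              this
          _ = μ₁ + (μ₂ - μ₁) / 2 := by field_simp
      have h2 : (1 / (m' : ℝ)) * ∑ i, X' i ω < μ₁ + (μ₂ - μ₁) / 2 := lt_trans hω h1
      have h3 : ∑ i, X' i ω < (m' : ℝ) * (μ₁ + (μ₂ - μ₁) / 2) := by
        have := mul_lt_mul_of_pos_left h2 hm'0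
        calc ∑ i, X' i ω = (m' : ℝ) * ((1 / (m' : ℝ)) * ∑ i, X' i ω) := by field_simp
          _ < (m' : ℝ) * (μ₁ + (μ₂ - μ₁) / 2) := this
      have hsum : ∑ i, (1 - X' i ω) = (m' : ℝ) - ∑ i, X' i ω := by
        rw [Finset.sum_sub_distrib]
        simp [Finset.card_univ]
      rw [hsum]
      nlinarith
  calc P {ω | (1 / (m' : ℝ)) * ∑ i, X' i ω < (1 / (m : ℝ)) * ∑ i, X i ω}
      ≤ P ({ω | (m : ℝ) * (μ₁ + (μ₂ - μ₁) / 2) ≤ ∑ i, X i ω} ∪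
          {ω | (m' : ℝ) * ((1 - μ₂) + (μ₂ - μ₁) / 2) ≤ ∑ i, (1 - X' i ω)}) :=
        measure_mono hsub
    _ ≤ P {ω | (m : ℝ) * (μ₁ + (μ₂ - μ₁) / 2) ≤ ∑ i, X i ω} +
        P {ω | (m' : ℝ) * ((1 - μ₂) + (μ₂ - μ₁) / 2) ≤ ∑ i, (1 - X' i ω)} :=
        measure_union_le _ _
    _ ≤ ENNReal.ofReal (Real.exp (-2 * ((μ₂ - μ₁) / 2) ^ 2 * m)) +
        ENNReal.ofReal (Real.exp (-2 * ((μ₂ - μ₁) / 2) ^ 2 * m')) := add_le_add hB hC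
    _ ≤ ENNReal.ofReal (2 * Real.exp (-(μ₂ - μ₁) ^ 2 * x / 2)) := by
        rw [← ENNReal.ofReal_add (Real.exp_pos _).le (Real.exp_pos _).le]
        apply ENNReal.ofReal_le_ofReal
        have key : ∀ y : ℝ, x ≤ y →
            Real.exp (-2 * ((μ₂ - μ₁) / 2) ^ 2 * y) ≤ Real.exp (-(μ₂ - μ₁) ^ 2 * x / 2) := by
          intro y hy
          apply Real.exp_le_exp.2
          nlinarith [mul_nonneg (sq_nonneg (μ₂ - μ₁)) (sub_nonneg.2 hy)]
        linarith [key _ hm, key _ hm']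
end
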